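/- Let d be a positive even integer and s a positive integer with 2s ≤ d. The sets C_ε, ε ∈ I^s, are pairwise disjoint, and the cardinality of their union equals Σ_{i=0}^{d/2 - s} C(d-s, i) + Σ_{k=1}^{s-1} 2^k · C(d-s, d/2 - s + k) + 2^s · Σ_{i=d/2}^{d-s} C(d-s, i), where C(n,i) denotes the binomial coefficient. -/

import Mathlib

/-- Strings of length `d` over the alphabet `S = {0,1,*}`; `none` is the joker `*`. -/
abbrev JString (d : ℕ) := Fin d → Option Bool

/-- The distance between two strings over `{0,1,*}`: the number of positions where both
entries are binary digits and they differ. -/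
def jDist {d : ℕ} (u v : JString d) : ℕ :=
  (Finset.univ.filter fun i => ∃ a b : Bool, u i = some a ∧ v i = some b ∧ a ≠ b).card

/-- `nkd k d` is `n(k,d)`: the maximum size of a family of strings in `S^d` any two
distinct members of which are at distance at least `1` and at most `k`. -/
noncomputable def nkd (k d : ℕ) : ℕ :=
  sSup {m | ∃ F : Finset (JString d),
    (∀ u ∈ F, ∀ v ∈ F, u ≠ v → 1 ≤ jDist u v ∧ jDist u v ≤ k) ∧ F.card = m}

/-- The weight `|x|` of a binary string. -/
def wt {n : ℕ} (x : Fin n → Bool) : ℕ := (Finset.univ.filter fun i => x i = true).card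

/-- The inner product `⟨x,y⟩` of two binary strings. -/
def ip {n : ℕ} (x y : Fin n → Bool) : ℕ :=
  (Finset.univ.filter fun i => x i = true ∧ y i = true).card

/-- The antipode `x̄` of a binary string. -/
def antipode {n : ℕ} (x : Fin n → Bool) : Fin n → Bool := fun i => !(x i)

/-- `t(ε)` (0-based): the largest index at which `ε` differs from its last entry; for
nonconstant `ε` this is the unique (0-based) index `i` with `ε i ≠ ε (i+1) = ⋯ = ε (s-1)`. -/
noncomputable def tIdx {s : ℕ} (ε : Fin s → Bool) : ℕ :=
  sSup {i : ℕ | ∃ h : i < s, ∃ h' : s - 1 < s, ε ⟨i, h⟩ ≠ ε ⟨s - 1, h'⟩}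

/-- The set `A_ε = {ε_1} × ⋯ × {ε_{t(ε)}} × I^{s-1-t(ε)} ⊆ I^{s-1}`. -/
def Aset {s : ℕ} (ε : Fin s → Bool) : Set (Fin (s - 1) → Bool) :=
  {x | ∀ j : Fin (s - 1), (j : ℕ) ≤ tIdx ε →
    x j = ε ⟨(j : ℕ), Nat.lt_of_lt_of_le j.isLt (Nat.sub_le s 1)⟩}

/-- The sets `X_k ⊆ I^{d-s}`: `X_0 = {|x| ≤ d/2 - s}`, `X_k = {|x| = d/2 - s + k}` for
`0 < k < s`, and `X_s = {|x| ≥ d/2}`. -/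
def Xk (d s k : ℕ) : Set (Fin (d - s) → Bool) :=
  if k = 0 then {x | wt x ≤ d / 2 - s}
  else if k = s then {x | d / 2 ≤ wt x}
  else {x | wt x = d / 2 - s + k}

/-- The last `m` coordinates of a binary string of length `n` (junk values if `m > n`). -/
def suffix (m : ℕ) {n : ℕ} (x : Fin n → Bool) : Fin m → Bool :=
  fun j => if h : n - m + (j : ℕ) < n then x ⟨n - m + (j : ℕ), h⟩ else false

/-- The set `B_ε ⊆ I^{d-s}`: `B_α = X_0`, `B_ω = X_s`, and for `ε ∉ {α,ω}`,
`B_ε = X_{|ε|} ∩ (I^{d-2s+1} × A_ε)`, identifying `I^{d-s}` with `I^{d-2s+1} × I^{s-1}`. -/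
def Bset (d : ℕ) {s : ℕ} (ε : Fin s → Bool) : Set (Fin (d - s) → Bool) :=
  if ε = (fun _ => false) then Xk d s 0
  else if ε = (fun _ => true) then Xk d s s
  else Xk d s (wt ε) ∩ {x | suffix (s - 1) x ∈ Aset ε}

/-- Concatenation of a binary string of length `d - s` with a string over `{0,1,*}` of
length `s`, producing a string over `{0,1,*}` of length `d`. -/
def glue {d s : ℕ} (x : Fin (d - s) → Bool) (w : Fin s → Option Bool) : JString d :=
  fun i => if h : (i : ℕ) < d - s then some (x ⟨(i : ℕ), h⟩)
    else if h' : (i : ℕ) - (d - s) < s then w ⟨(i : ℕ) - (d - s), h'⟩ else none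

/-- The set `*^ε = *^{ε_1} × ⋯ × *^{ε_s} ⊆ S^s`, where `*^0 = {*}` and `*^1 = {0,1}`. -/
def starSet {s : ℕ} (ε : Fin s → Bool) : Set (Fin s → Option Bool) :=
  {w | ∀ j, if ε j = true then ∃ b : Bool, w j = some b else w j = none}

/-- The set `C_ε = B_ε × *^ε ⊆ S^d`. -/
def Cset (d : ℕ) {s : ℕ} (ε : Fin s → Bool) : Set (JString d) :=
  {u | ∃ x ∈ Bset d ε, ∃ w ∈ starSet ε, u = glue x w}

open Finset

section wtlemmas
variable {n : ℕ}

lemma wt_le (x : Fin n → Bool) : wt x ≤ n := by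
  classical
  calc wt x ≤ (Finset.univ : Finset (Fin n)).card := Finset.card_filter_le _ _
  _ = n := by simp

lemma wt_eq_zero_iff (x : Fin n → Bool) : wt x = 0 ↔ x = fun _ => false := by
  unfold wt
  rw [Finset.card_eq_zero, Finset.filter_eq_empty_iff]
  constructor
  · intro h; funext i; simpa using h (Finset.mem_univ i)
  · intro h i _; simp [h]

lemma wt_eq_n_iff (x : Fin n → Bool) : wt x = n ↔ x = fun _ => true := by
  unfold wt
  constructor
  · intro h
    have : (Finset.univ.filter fun i => x i = true) = Finset.univ :=
      Finset.eq_of_subset_of_card_le (Finset.filter_subset _ _) (by simp [h])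
    funext i
    have := Finset.mem_filter.mp (this ▸ Finset.mem_univ i)
    simpa using this.2
  · intro h; simp [h]

lemma card_wt_eq (i : ℕ) :
    ((Finset.univ : Finset (Fin n → Bool)).filter fun x => wt x = i).card = n.choose i := by
  classical
  have : ((Finset.univ : Finset (Fin n → Bool)).filter fun x => wt x = i).card
      = (Finset.powersetCard i (Finset.univ : Finset (Fin n))).card := by
    apply Finset.card_bij (fun x _ => Finset.univ.filter fun j => x j = true)
    · intro x hx
      rw [Finset.mem_powersetCard]
      exact ⟨Finset.subset_univ _, (Finset.mem_filter.mp hx).2⟩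
    · intro x hx y hy hxy
      funext j
      have : (j ∈ Finset.univ.filter fun j => x j = true) ↔
          (j ∈ Finset.univ.filter fun j => y j = true) := by rw [hxy]
      simp only [Finset.mem_filter, Finset.mem_univ, true_and] at this
      cases hx' : x j <;> cases hy' : y j <;> simp_all
    · intro S hS
      refine ⟨fun j => decide (j ∈ S), ?_, ?_⟩
      · rw [Finset.mem_filter]
        refine ⟨Finset.mem_univ _, ?_⟩
        rw [Finset.mem_powersetCard] at hS
        unfold wt
        rw [← hS.2]
        congr 1
        ext j; simp
      · ext j; simp
  rw [this, Finset.card_powersetCard, Finset.card_univ, Fintype.card_fin]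
end wtlemmas

section star2

variable {s d : ℕ}

lemma starSet_card (ε : Fin s → Bool) [DecidablePred (· ∈ starSet ε)] :
    ((Finset.univ : Finset (Fin s → Option Bool)).filter (· ∈ starSet ε)).card = 2 ^ wt ε := by
  classical
  have key : (Finset.univ : Finset ({j // ε j = true} → Bool)).card
      = ((Finset.univ : Finset (Fin s → Option Bool)).filter (· ∈ starSet ε)).card := by
    apply Finset.card_bij
      (fun g _ => (fun j => if h : ε j = true then some (g ⟨j, h⟩) else none : Fin s → Option Bool))
    · intro g _
      simp only [Finset.mem_filter, Finset.mem_univ, true_and]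
      intro j
      by_cases h : ε j = true
      · simp [h]
      · simp [h]
    · intro g _ g' _ hgg
      funext j
      have := congrFun hgg j.1
      rw [dif_pos j.2, dif_pos j.2] at this
      exact Option.some_injective _ this
    · intro w hw
      simp only [Finset.mem_filter, Finset.mem_univ, true_and, starSet, Set.mem_setOf_eq] at hw
      refine ⟨fun j => (w j.1).getD false, Finset.mem_univ _, ?_⟩
      funext j
      by_cases h : ε j = true
      · have hj := hw j
        rw [if_pos h] at hj
        obtain ⟨b, hb⟩ := hj
        simp [h, hb]
      · have := hw j
        rw [if_neg h] at this
        simp [h, this]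
  rw [← key, Finset.card_univ, Fintype.card_fun, Fintype.card_bool, Fintype.card_subtype]
  rfl

lemma glue_eval_lo {d s : ℕ} (x : Fin (d - s) → Bool) (w : Fin s → Option Bool)
    (i : Fin (d - s)) (h : (i : ℕ) < d) : glue x w ⟨i, h⟩ = some (x i) := by
  simp [glue, i.isLt]

lemma glue_eval_hi {d s : ℕ} (hsd : s ≤ d) (x : Fin (d - s) → Bool) (w : Fin s → Option Bool)
    (j : Fin s) (h : d - s + (j : ℕ) < d) : glue x w ⟨d - s + (j : ℕ), h⟩ = w j := by
  have h1 : ¬ (d - s + (j : ℕ) < d - s) := by omega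
  have h2 : d - s + (j : ℕ) - (d - s) = (j : ℕ) := by omega
  simp only [glue, h1, dif_neg, h2, j.isLt, dif_pos]
  simp

lemma hi_lt {d s : ℕ} (hsd : s ≤ d) (j : Fin s) : d - s + (j : ℕ) < d := by
  have := j.isLt; omega

lemma glue_inj {d s : ℕ} (hsd : s ≤ d) (x x' : Fin (d - s) → Bool)
    (w w' : Fin s → Option Bool) (h : glue x w = glue x' w') : x = x' ∧ w = w' := by
  constructor
  · funext i
    have hi : (i : ℕ) < d := lt_of_lt_of_le i.isLt (Nat.sub_le d s)
    have := congrFun h ⟨i, hi⟩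
    rw [show (⟨(i : ℕ), hi⟩ : Fin d) = ⟨(i : ℕ), hi⟩ from rfl] at this
    rw [glue_eval_lo x w i hi, glue_eval_lo x' w' i hi] at this
    exact Option.some_injective _ this
  · funext j
    have hj := hi_lt hsd j
    have := congrFun h ⟨d - s + (j : ℕ), hj⟩
    rwa [glue_eval_hi hsd x w j hj, glue_eval_hi hsd x' w' j hj] at this


end star2

section core

variable {r : ℕ}

def epsOf (y : Fin r → Bool) (t : Fin r) : Fin (r + 1) → Bool :=
  fun i => if h : (i : ℕ) ≤ (t : ℕ) then y ⟨(i : ℕ), lt_of_le_of_lt h t.isLt⟩ else !(y t)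

lemma epsOf_le (y : Fin r → Bool) (t : Fin r) (i : Fin (r + 1)) (h : (i : ℕ) ≤ (t : ℕ)) :
    epsOf y t i = y ⟨(i : ℕ), lt_of_le_of_lt h t.isLt⟩ := dif_pos h

lemma epsOf_gt (y : Fin r → Bool) (t : Fin r) (i : Fin (r + 1)) (h : (t : ℕ) < (i : ℕ)) :
    epsOf y t i = !(y t) := dif_neg (not_le.mpr h)

lemma epsOf_at_t (y : Fin r → Bool) (t : Fin r) :
    epsOf y t ⟨(t : ℕ), lt_of_lt_of_le t.isLt (Nat.le_succ r)⟩ = y t := by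
  rw [epsOf_le y t _ le_rfl]

lemma epsOf_at_last (y : Fin r → Bool) (t : Fin r) :
    epsOf y t ⟨r, Nat.lt_succ_self r⟩ = !(y t) :=
  epsOf_gt y t _ t.isLt

lemma epsOf_ne_false (y : Fin r → Bool) (t : Fin r) : epsOf y t ≠ fun _ => false := by
  intro h
  have h1 := congrFun h ⟨(t : ℕ), lt_of_lt_of_le t.isLt (Nat.le_succ r)⟩
  have h2 := congrFun h ⟨r, Nat.lt_succ_self r⟩
  rw [epsOf_at_t] at h1
  rw [epsOf_at_last] at h2
  simp [h1] at h2

lemma epsOf_ne_true (y : Fin r → Bool) (t : Fin r) : epsOf y t ≠ fun _ => true := by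
  intro h
  have h1 := congrFun h ⟨(t : ℕ), lt_of_lt_of_le t.isLt (Nat.le_succ r)⟩
  have h2 := congrFun h ⟨r, Nat.lt_succ_self r⟩
  rw [epsOf_at_t] at h1
  rw [epsOf_at_last] at h2
  simp [h1] at h2

lemma tIdx_epsOf (y : Fin r → Bool) (t : Fin r) : tIdx (epsOf y t) = (t : ℕ) := by
  have hlast : (r + 1 - 1 : ℕ) = r := rfl
  apply IsGreatest.csSup_eq
  constructor
  · refine ⟨lt_of_lt_of_le t.isLt (Nat.le_succ r), Nat.sub_lt (Nat.succ_pos r) one_pos, ?_⟩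
    have : epsOf y t ⟨r + 1 - 1, Nat.sub_lt (Nat.succ_pos r) one_pos⟩ = !(y t) :=
      epsOf_gt y t _ t.isLt
    rw [this, epsOf_at_t]
    simp
  · rintro i ⟨hi, h', hne⟩
    by_contra hgt
    push_neg at hgt
    apply hne
    have e1 : epsOf y t ⟨i, hi⟩ = !(y t) := epsOf_gt y t _ hgt
    have e2 : epsOf y t ⟨r + 1 - 1, h'⟩ = !(y t) := epsOf_gt y t _ t.isLt
    rw [e1, e2]

lemma mem_Aset_epsOf (y : Fin r → Bool) (t : Fin r) : y ∈ Aset (epsOf y t) := by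
  intro j hj
  rw [tIdx_epsOf] at hj
  rw [epsOf_le y t _ hj]
  simp

lemma exists_epsOf_of_mem (y : Fin r → Bool) (ε : Fin (r + 1) → Bool)
    (h0 : ε ≠ fun _ => false) (h1 : ε ≠ fun _ => true) (hA : y ∈ Aset ε) :
    ∃ t : Fin r, ε = epsOf y t := by
  set S : Set ℕ := {i : ℕ | ∃ h : i < r + 1, ∃ h' : r + 1 - 1 < r + 1,
    ε ⟨i, h⟩ ≠ ε ⟨r + 1 - 1, h'⟩} with hS
  have hlast : (r + 1 - 1 : ℕ) = r := rfl
  have hne : S.Nonempty := by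
    by_contra hemp
    rw [Set.not_nonempty_iff_eq_empty] at hemp
    have hconst : ∀ i : Fin (r + 1), ε i = ε ⟨r, Nat.lt_succ_self r⟩ := by
      intro i
      by_contra hne'
      have : (i : ℕ) ∈ S := ⟨i.isLt, Nat.lt_succ_self r, by simpa [Fin.eta] using hne'⟩
      rw [hemp] at this; exact this
    cases hb : ε ⟨r, Nat.lt_succ_self r⟩
    · exact h0 (funext fun i => by rw [hconst i, hb])
    · exact h1 (funext fun i => by rw [hconst i, hb])
  have hbdd : BddAbove S := by
    refine ⟨r, fun i hi => ?_⟩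
    obtain ⟨h, h', hne'⟩ := hi
    by_contra hgt
    push_neg at hgt
    have : i = r := by omega
    apply hne'
    have : (⟨i, h⟩ : Fin (r+1)) = ⟨r + 1 - 1, h'⟩ := by
      simp only [Fin.mk.injEq]; omega
    rw [this]
  have hmem : sSup S ∈ S := Nat.sSup_mem hne hbdd
  obtain ⟨hsup_lt, h', hsup_ne⟩ := hmem
  have hsup_lt_r : sSup S < r := by
    by_contra hge
    push_neg at hge
    have : sSup S = r := le_antisymm (by omega) hge
    apply hsup_ne
    have : (⟨sSup S, hsup_lt⟩ : Fin (r+1)) = ⟨r + 1 - 1, h'⟩ := by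
      simp only [Fin.mk.injEq]; omega
    rw [this]
  refine ⟨⟨sSup S, hsup_lt_r⟩, ?_⟩
  have htIdx : tIdx ε = sSup S := rfl
  funext i
  rcases le_or_gt (i : ℕ) (sSup S) with hle | hgt
  · rw [epsOf_le y _ i hle]
    have := hA ⟨(i : ℕ), lt_of_le_of_lt hle hsup_lt_r⟩ (by simpa [htIdx] using hle)
    rw [← this]
  · rw [epsOf_gt y _ i hgt]
    have hiS : (i : ℕ) ∉ S := fun h => absurd (le_csSup hbdd h) (not_le.mpr hgt)
    have hieq : ε i = ε ⟨r + 1 - 1, h'⟩ := by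
      by_contra hne'
      exact hiS ⟨i.isLt, h', by simpa [Fin.eta] using hne'⟩
    have hyt : ε ⟨sSup S, lt_of_lt_of_le hsup_lt_r (Nat.le_succ r)⟩
        = y ⟨sSup S, hsup_lt_r⟩ := by
      have := hA ⟨sSup S, hsup_lt_r⟩ (by simp [htIdx])
      rw [this]
    have hne2 : ε ⟨r + 1 - 1, h'⟩ ≠ ε ⟨sSup S, lt_of_lt_of_le hsup_lt_r (Nat.le_succ r)⟩ := by
      exact fun h => hsup_ne (by rw [← h])
    rw [hieq, ← Bool.not_not (ε ⟨r + 1 - 1, h'⟩)]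
    rw [hyt] at hne2
    cases hy : y ⟨sSup S, hsup_lt_r⟩ <;> rw [hy] at hne2 <;> simp_all

lemma wt_epsOf_lt_of_true (y : Fin r → Bool) (t t' : Fin r) (htt : (t : ℕ) < (t' : ℕ))
    (hyt : y t = true) : wt (epsOf y t) < wt (epsOf y t') := by
  apply Finset.card_lt_card
  have hsub : (Finset.univ.filter fun i => epsOf y t i = true)
      ⊆ (Finset.univ.filter fun i => epsOf y t' i = true) := by
    intro i hi
    rw [Finset.mem_filter] at hi ⊢
    refine ⟨Finset.mem_univ _, ?_⟩
    have hile : (i : ℕ) ≤ (t : ℕ) := by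
      by_contra hgt
      push_neg at hgt
      rw [epsOf_gt y t i hgt, hyt] at hi
      simpa using hi.2
    rw [epsOf_le y t' i (le_of_lt (lt_of_le_of_lt hile htt))]
    rw [epsOf_le y t i hile] at hi
    exact hi.2
  rw [Finset.ssubset_iff_of_subset hsub]
  cases hyt' : y t'
  · refine ⟨⟨r, Nat.lt_succ_self r⟩, ?_, ?_⟩
    · rw [Finset.mem_filter]
      refine ⟨Finset.mem_univ _, ?_⟩
      rw [epsOf_gt y t' _ t'.isLt, hyt']
      rfl
    · rw [Finset.mem_filter]
      rw [epsOf_gt y t _ t.isLt, hyt]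
      simp
  · refine ⟨⟨(t' : ℕ), lt_of_lt_of_le t'.isLt (Nat.le_succ r)⟩, ?_, ?_⟩
    · rw [Finset.mem_filter]
      refine ⟨Finset.mem_univ _, ?_⟩
      rw [epsOf_le y t' _ le_rfl]
      simpa using hyt'
    · rw [Finset.mem_filter]
      rw [epsOf_gt y t _ htt, hyt]
      simp

lemma wt_epsOf_lt_of_false (y : Fin r → Bool) (t t' : Fin r) (htt : (t : ℕ) < (t' : ℕ))
    (hyt : y t = false) : wt (epsOf y t') < wt (epsOf y t) := by
  apply Finset.card_lt_card
  have hsub : (Finset.univ.filter fun i => epsOf y t' i = true)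
      ⊆ (Finset.univ.filter fun i => epsOf y t i = true) := by
    intro i hi
    rw [Finset.mem_filter] at hi ⊢
    refine ⟨Finset.mem_univ _, ?_⟩
    rcases le_or_gt (i : ℕ) (t : ℕ) with hle | hgt
    · rw [epsOf_le y t i hle]
      rw [epsOf_le y t' i (le_of_lt (lt_of_le_of_lt hle htt))] at hi
      exact hi.2
    · rw [epsOf_gt y t i hgt, hyt]
      rfl
  rw [Finset.ssubset_iff_of_subset hsub]
  cases hyt' : y t'
  · refine ⟨⟨(t' : ℕ), lt_of_lt_of_le t'.isLt (Nat.le_succ r)⟩, ?_, ?_⟩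
    · rw [Finset.mem_filter]
      refine ⟨Finset.mem_univ _, ?_⟩
      rw [epsOf_gt y t _ htt, hyt]
      rfl
    · rw [Finset.mem_filter]
      rw [epsOf_le y t' _ le_rfl]
      simp [hyt']
  · refine ⟨⟨r, Nat.lt_succ_self r⟩, ?_, ?_⟩
    · rw [Finset.mem_filter]
      refine ⟨Finset.mem_univ _, ?_⟩
      rw [epsOf_gt y t _ t.isLt, hyt]
      rfl
    · rw [Finset.mem_filter]
      rw [epsOf_gt y t' _ t'.isLt, hyt']
      simp

lemma wt_epsOf_injective (y : Fin r → Bool) :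
    Function.Injective (fun t : Fin r => wt (epsOf y t)) := by
  intro t t' h
  by_contra hne
  rcases lt_or_gt_of_ne (fun hv : (t : ℕ) = (t' : ℕ) => hne (Fin.ext hv)) with hlt | hgt
  · cases hyt : y t
    · exact absurd h (ne_of_gt (wt_epsOf_lt_of_false y t t' hlt hyt))
    · exact absurd h (ne_of_lt (wt_epsOf_lt_of_true y t t' hlt hyt))
  · cases hyt : y t'
    · exact absurd h (ne_of_lt (wt_epsOf_lt_of_false y t' t hgt hyt))
    · exact absurd h (ne_of_gt (wt_epsOf_lt_of_true y t' t hgt hyt))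

lemma wt_epsOf_mem_Icc (y : Fin r → Bool) (t : Fin r) :
    wt (epsOf y t) ∈ Finset.Icc 1 r := by
  rw [Finset.mem_Icc]
  constructor
  · rcases Nat.eq_zero_or_pos (wt (epsOf y t)) with h0 | h1
    · exact absurd ((wt_eq_zero_iff _).mp h0) (epsOf_ne_false y t)
    · exact h1
  · have hle := wt_le (epsOf y t)
    rcases Nat.lt_or_ge (wt (epsOf y t)) (r + 1) with h | h
    · omega
    · have : wt (epsOf y t) = r + 1 := by omega
      exact absurd ((wt_eq_n_iff _).mp this) (epsOf_ne_true y t)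

lemma exists_epsOf_wt (y : Fin r → Bool) (k : ℕ) (hk1 : 1 ≤ k) (hk2 : k ≤ r) :
    ∃ t : Fin r, wt (epsOf y t) = k := by
  have himg : (Finset.univ : Finset (Fin r)).image (fun t => wt (epsOf y t))
      = Finset.Icc 1 r := by
    apply Finset.eq_of_subset_of_card_le
    · intro k hk
      rw [Finset.mem_image] at hk
      obtain ⟨t, _, rfl⟩ := hk
      exact wt_epsOf_mem_Icc y t
    · rw [Finset.card_image_of_injective _ (wt_epsOf_injective y)]
      simp
  have : k ∈ (Finset.univ : Finset (Fin r)).image (fun t => wt (epsOf y t)) := by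
    rw [himg, Finset.mem_Icc]; exact ⟨hk1, hk2⟩
  rw [Finset.mem_image] at this
  obtain ⟨t, _, ht⟩ := this
  exact ⟨t, ht⟩

lemma existsUnique_eps (y : Fin r → Bool) (k : ℕ) (hk1 : 1 ≤ k) (hk2 : k ≤ r) :
    ∃! ε : Fin (r + 1) → Bool,
      wt ε = k ∧ ε ≠ (fun _ => false) ∧ ε ≠ (fun _ => true) ∧ y ∈ Aset ε := by
  obtain ⟨t, ht⟩ := exists_epsOf_wt y k hk1 hk2
  refine ⟨epsOf y t, ⟨ht, epsOf_ne_false y t, epsOf_ne_true y t, mem_Aset_epsOf y t⟩, ?_⟩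
  rintro ε ⟨hwt, h0, h1, hA⟩
  obtain ⟨t', rfl⟩ := exists_epsOf_of_mem y ε h0 h1 hA
  have : t' = t := wt_epsOf_injective y
    (show wt (epsOf y t') = wt (epsOf y t) by rw [ht, hwt])
  rw [this]


end core

lemma card_wt_le (n m : ℕ) :
    ((Finset.univ : Finset (Fin n → Bool)).filter fun x => wt x ≤ m).card
      = ∑ i ∈ Finset.range (m + 1), n.choose i := by
  classical
  rw [Finset.card_eq_sum_card_fiberwise (f := wt) (t := Finset.range (m + 1))
    (fun x hx => by rw [Finset.mem_coe, Finset.mem_filter] at hx; rw [Finset.mem_coe, Finset.mem_range]; omega)]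
  apply Finset.sum_congr rfl
  intro i hi
  rw [Finset.mem_range] at hi
  rw [← card_wt_eq i]
  congr 1
  ext x
  simp only [Finset.mem_filter, Finset.mem_univ, true_and]
  constructor
  · rintro ⟨_, h⟩; exact h
  · intro h; exact ⟨by omega, h⟩

lemma card_wt_ge (n c : ℕ) :
    ((Finset.univ : Finset (Fin n → Bool)).filter fun x => c ≤ wt x).card
      = ∑ i ∈ Finset.Icc c n, n.choose i := by
  classical
  rw [Finset.card_eq_sum_card_fiberwise (f := wt) (t := Finset.Icc c n)
    (fun x hx => by
      rw [Finset.mem_coe, Finset.mem_filter] at hx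
      rw [Finset.mem_coe, Finset.mem_Icc]
      exact ⟨hx.2, wt_le x⟩)]
  apply Finset.sum_congr rfl
  intro i hi
  rw [Finset.mem_Icc] at hi
  rw [← card_wt_eq i]
  congr 1
  ext x
  simp only [Finset.mem_filter, Finset.mem_univ, true_and]
  constructor
  · rintro ⟨_, h⟩; exact h
  · intro h; exact ⟨by omega, h⟩

lemma sum_card_partition {α ι : Type*} [DecidableEq α] [DecidableEq ι]
    (E : Finset ι) (T : Finset α) (P : ι → α → Prop) [∀ i a, Decidable (P i a)]
    (huniq : ∀ a ∈ T, ∃! i, i ∈ E ∧ P i a) :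
    ∑ i ∈ E, (T.filter fun a => P i a).card = T.card := by
  have h1 : ∀ i ∈ E, (T.filter fun a => P i a).card = ∑ a ∈ T, ite (P i a) 1 0 := by
    intro i _
    rw [Finset.card_filter]
  rw [Finset.sum_congr rfl h1, Finset.sum_comm]
  have h2 : ∀ a ∈ T, (∑ i ∈ E, ite (P i a) 1 0) = 1 := by
    intro a ha
    obtain ⟨i₀, ⟨hi₀E, hi₀P⟩, huq⟩ := huniq a ha
    rw [← Finset.card_filter]
    rw [Finset.card_eq_one]
    refine ⟨i₀, ?_⟩
    ext i
    simp only [Finset.mem_filter, Finset.mem_singleton]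
    constructor
    · rintro ⟨h1', h2'⟩; exact huq i ⟨h1', h2'⟩
    · rintro rfl; exact ⟨hi₀E, hi₀P⟩
  rw [Finset.sum_congr rfl h2]
  simp


lemma Cset_inter_empty {d s : ℕ} (hsd : s ≤ d) (ε γ : Fin s → Bool) (hne : ε ≠ γ) :
    Cset d ε ∩ Cset d γ = ∅ := by
  ext u
  simp only [Set.mem_inter_iff, Set.mem_empty_iff_false, iff_false, not_and, Cset,
    Set.mem_setOf_eq]
  rintro ⟨x, hx, w, hw, rfl⟩ ⟨x', hx', w', hw', hglue⟩
  obtain ⟨j, hj⟩ : ∃ j, ε j ≠ γ j := by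
    by_contra h
    push_neg at h
    exact hne (funext h)
  have hwj : w j = w' j := by
    have h1 := glue_eval_hi hsd x w j (hi_lt hsd j)
    have h2 := glue_eval_hi hsd x' w' j (hi_lt hsd j)
    rw [← h1, ← h2, hglue]
  have hwε := hw j
  have hwγ := hw' j
  cases hε : ε j <;> cases hγ : γ j
  · exact hj (by rw [hε, hγ])
  · rw [if_neg (by simp [hε])] at hwε
    rw [if_pos (by simp [hγ])] at hwγ
    obtain ⟨b, hb⟩ := hwγ
    rw [hwj, hb] at hwε
    exact absurd hwε (by simp)
  · rw [if_pos (by simp [hε])] at hwε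
    rw [if_neg (by simp [hγ])] at hwγ
    obtain ⟨b, hb⟩ := hwε
    rw [← hwj, hb] at hwγ
    exact absurd hwγ (by simp)
  · exact hj (by rw [hε, hγ])

/-- Let `d` be a positive even integer and `s` positive with `2s ≤ d`.
The sets `C_ε`, `ε ∈ I^s`, are pairwise disjoint and the cardinality of their union is
`Σ_{i=0}^{d/2-s} C(d-s,i) + Σ_{k=1}^{s-1} 2^k C(d-s, d/2-s+k) + 2^s Σ_{i=d/2}^{d-s} C(d-s,i)`. -/
theorem Cset_disjoint_card (d s : ℕ) (hd : 0 < d) (hde : Even d) (hs : 0 < s)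
    (hsd : 2 * s ≤ d) :
    (∀ ε γ : Fin s → Bool, ε ≠ γ → Cset d ε ∩ Cset d γ = ∅) ∧
    (⋃ ε : Fin s → Bool, Cset d ε).ncard =
      ∑ i ∈ Finset.range (d / 2 - s + 1), (d - s).choose i
        + ∑ k ∈ Finset.Icc 1 (s - 1), 2 ^ k * (d - s).choose (d / 2 - s + k)
        + 2 ^ s * ∑ i ∈ Finset.Icc (d / 2) (d - s), (d - s).choose i := by
  classical
  have hsd' : s ≤ d := by omega
  have hdisj : ∀ ε γ : Fin s → Bool, ε ≠ γ → Cset d ε ∩ Cset d γ = ∅ :=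
    fun ε γ h => Cset_inter_empty hsd' ε γ h
  refine ⟨hdisj, ?_⟩
  obtain ⟨r, rfl⟩ : ∃ r, s = r + 1 := ⟨s - 1, by omega⟩
  simp only [Nat.add_sub_cancel]
  rw [Set.ncard_eq_toFinset_card', Set.toFinset_iUnion,
    Finset.card_biUnion (fun ε _ γ _ hne => by
      rw [Function.onFun, Finset.disjoint_left]
      intro u hu hv
      have hmem : u ∈ Cset d ε ∩ Cset d γ := ⟨Set.mem_toFinset.mp hu, Set.mem_toFinset.mp hv⟩
      rw [hdisj ε γ hne] at hmem
      exact hmem)]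
  have hC : ∀ ε : Fin (r + 1) → Bool,
      (Cset d ε).toFinset.card
        = ((Finset.univ.filter (· ∈ Bset d ε)).card) * 2 ^ wt ε := by
    intro ε
    have hinj : Function.Injective
        (fun p : (Fin (d - (r + 1)) → Bool) × (Fin (r + 1) → Option Bool) => glue p.1 p.2) := by
      intro p q hpq
      obtain ⟨h1, h2⟩ := glue_inj hsd' p.1 q.1 p.2 q.2 hpq
      exact Prod.ext h1 h2
    have himg : (Cset d ε).toFinset
        = ((Finset.univ.filter (· ∈ Bset d ε)) ×ˢ (Finset.univ.filter (· ∈ starSet ε))).image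
            (fun p => glue p.1 p.2) := by
      ext u
      rw [Set.mem_toFinset]
      simp only [Set.mem_toFinset, Finset.mem_image, Finset.mem_product, Finset.mem_filter,
        Finset.mem_univ, true_and, Prod.exists, Cset, Set.mem_setOf_eq]
      constructor
      · rintro ⟨x, hx, w, hw, rfl⟩
        exact ⟨x, w, ⟨hx, hw⟩, rfl⟩
      · rintro ⟨x, w, ⟨hx, hw⟩, rfl⟩
        exact ⟨x, hx, w, hw, rfl⟩
    rw [himg, Finset.card_image_of_injective _ hinj, Finset.card_product, starSet_card]
  rw [Finset.sum_congr rfl (fun ε _ => hC ε)]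
  set α0 : Fin (r + 1) → Bool := fun _ => false with hα0
  set ω0 : Fin (r + 1) → Bool := fun _ => true with hω0
  have hαω : α0 ≠ ω0 := by
    intro h
    simpa [hα0, hω0] using congrFun h ⟨0, Nat.succ_pos r⟩
  have hsub : ({α0, ω0} : Finset (Fin (r + 1) → Bool)) ⊆ Finset.univ := Finset.subset_univ _
  rw [← Finset.sum_sdiff hsub, Finset.sum_pair hαω]
  have hwα : wt α0 = 0 := by simp [wt, hα0]
  have hwω : wt ω0 = r + 1 := by simp [wt, hω0]
  have hfα : (Finset.univ.filter (· ∈ Bset d α0)).card * 2 ^ wt α0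
      = ∑ i ∈ Finset.range (d / 2 - (r + 1) + 1), (d - (r + 1)).choose i := by
    rw [hwα, pow_zero, mul_one, ← card_wt_le (d - (r + 1)) (d / 2 - (r + 1))]
    have : (Finset.univ.filter (· ∈ Bset d α0))
        = (Finset.univ.filter fun x : Fin (d - (r + 1)) → Bool => wt x ≤ d / 2 - (r + 1)) := by
      ext x
      simp only [Finset.mem_filter, Finset.mem_univ, true_and]
      rw [show Bset d α0 = Xk d (r + 1) 0 from if_pos rfl, Xk, if_pos rfl]
      rfl
    rw [this]
  have hfω : (Finset.univ.filter (· ∈ Bset d ω0)).card * 2 ^ wt ω0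
      = 2 ^ (r + 1) * ∑ i ∈ Finset.Icc (d / 2) (d - (r + 1)), (d - (r + 1)).choose i := by
    rw [hwω, mul_comm, ← card_wt_ge (d - (r + 1)) (d / 2)]
    have : (Finset.univ.filter (· ∈ Bset d ω0))
        = (Finset.univ.filter fun x : Fin (d - (r + 1)) → Bool => d / 2 ≤ wt x) := by
      ext x
      simp only [Finset.mem_filter, Finset.mem_univ, true_and]
      rw [show Bset d ω0 = Xk d (r + 1) (r + 1) from by
          rw [Bset, if_neg (fun h => hαω h.symm), if_pos rfl],
        Xk, if_neg (Nat.succ_ne_zero r), if_pos rfl]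
      rfl
    rw [this]
  have hmid : ∑ ε ∈ Finset.univ \ {α0, ω0},
      (Finset.univ.filter (· ∈ Bset d ε)).card * 2 ^ wt ε
      = ∑ k ∈ Finset.Icc 1 r, 2 ^ k * (d - (r + 1)).choose (d / 2 - (r + 1) + k) := by
    rw [← Finset.sum_fiberwise_of_maps_to (g := wt) (t := Finset.Icc 1 r) (fun ε hε => by
      rw [Finset.mem_sdiff, Finset.mem_insert, Finset.mem_singleton] at hε
      push_neg at hε
      have h1 : wt ε ≠ 0 := fun h => hε.2.1 ((wt_eq_zero_iff ε).mp h)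
      have h2 : wt ε ≠ r + 1 := fun h => hε.2.2 ((wt_eq_n_iff ε).mp h)
      have h3 := wt_le ε
      rw [Finset.mem_Icc]
      omega)]
    apply Finset.sum_congr rfl
    intro k hk
    rw [Finset.mem_Icc] at hk
    have hEk : ∀ ε ∈ (Finset.univ \ {α0, ω0}).filter (fun ε => wt ε = k),
        (Finset.univ.filter (· ∈ Bset d ε)).card * 2 ^ wt ε
          = 2 ^ k * ((Finset.univ.filter fun x : Fin (d - (r + 1)) → Bool =>
              wt x = d / 2 - (r + 1) + k).filter
              (fun x => suffix r x ∈ Aset ε)).card := by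
      intro ε hε
      rw [Finset.mem_filter, Finset.mem_sdiff, Finset.mem_insert, Finset.mem_singleton] at hε
      obtain ⟨⟨_, hεne⟩, hwtε⟩ := hε
      push_neg at hεne
      rw [hwtε, mul_comm]
      congr 1
      rw [Finset.filter_filter]
      have hB : Bset d ε = Xk d (r + 1) k ∩ {x | suffix r x ∈ Aset ε} := by
        rw [Bset, if_neg hεne.1, if_neg hεne.2, hwtε]
        rfl
      have : (Finset.univ.filter (· ∈ Bset d ε))
          = (Finset.univ.filter fun x : Fin (d - (r + 1)) → Bool =>
              wt x = d / 2 - (r + 1) + k ∧ suffix r x ∈ Aset ε) := by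
        ext x
        simp only [Finset.mem_filter, Finset.mem_univ, true_and]
        rw [hB, Set.mem_inter_iff, Xk, if_neg (show ¬ k = 0 by omega),
          if_neg (show ¬ k = r + 1 by omega)]
        simp only [Set.mem_setOf_eq]
      rw [this]
    rw [Finset.sum_congr rfl hEk, ← Finset.mul_sum]
    congr 1
    rw [sum_card_partition _ _ (fun (ε : Fin (r + 1) → Bool) x => suffix r x ∈ Aset ε) (fun x hx => by
      obtain ⟨ε₀, ⟨h1, h2, h3, h4⟩, huq⟩ := existsUnique_eps (suffix r x) k hk.1 hk.2
      refine ⟨ε₀, ⟨?_, h4⟩, ?_⟩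
      · rw [Finset.mem_filter, Finset.mem_sdiff, Finset.mem_insert, Finset.mem_singleton]
        exact ⟨⟨Finset.mem_univ _, fun h => by rcases h with h | h; exacts [h2 h, h3 h]⟩, h1⟩
      · rintro ε ⟨hεmem, hP⟩
        rw [Finset.mem_filter, Finset.mem_sdiff, Finset.mem_insert, Finset.mem_singleton] at hεmem
        obtain ⟨⟨_, hne⟩, hwt⟩ := hεmem
        push_neg at hne
        exact huq ε ⟨hwt, hne.1, hne.2, hP⟩)]
    rw [card_wt_eq]
  rw [hfα, hfω, hmid]
  ring
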